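/- Let n be a nonnegative integer or ∞, and p : ℝ → ℝ with p ∉ Cⁿ(ℝ,ℝ). Define 𝒜_p = {f ∈ Cⁿ(ℝ,ℝ) : f(p(·)+c) ∈ Cⁿ(ℝ,ℝ) for all c ∈ ℝ}. Then either 𝒜_p consists exactly of the constant functions, or there exists d ≠ 0 such that 𝒜_p = {f ∈ Cⁿ(ℝ,ℝ) : f is d-periodic}. -/

import Mathlib

open Filter Set Metric Topology

namespace Stmt16

/-- Points near which `p` is unbounded. -/
def Zset (p : ℝ → ℝ) : Set ℝ := {x | ∀ δ > 0, ∀ K, ∃ y, |y - x| < δ ∧ K < |p y|}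

/-- Bounded-sequence continuity. -/
def BSC (p : ℝ → ℝ) : Prop :=
  ∀ (x : ℝ) (u : ℕ → ℝ) (s : ℝ), Tendsto u atTop (𝓝 x) →
    Tendsto (fun i => p (u i)) atTop (𝓝 s) → s = p x

theorem select {P : ℕ → Prop} (h : ∀ i, ∃ j, i ≤ j ∧ P j) :
    ∃ m : ℕ → ℕ, (∀ i, P (m i)) ∧ ∀ i, i ≤ m i := by
  choose m h1 h2 using h; exact ⟨m, h2, h1⟩

theorem extract {g : ℕ → ℝ} {B : ℝ} (hB : ∀ i, |g i| ≤ B) :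
    ∃ φ : ℕ → ℕ, StrictMono φ ∧ ∃ s, Tendsto (g ∘ φ) atTop (𝓝 s) := by
  obtain ⟨a, -, φ, hφ, hten⟩ := (isCompact_Icc (a := -B) (b := B)).tendsto_subseq
    (fun i => mem_Icc.mpr ⟨(abs_le.mp (hB i)).1, (abs_le.mp (hB i)).2⟩)
  exact ⟨φ, hφ, a, hten⟩

theorem not_tendsto_freq {g : ℕ → ℝ} {L : ℝ} (h : ¬ Tendsto g atTop (𝓝 L)) :
    ∃ ε > 0, ∀ i, ∃ j, i ≤ j ∧ ε ≤ |g j - L| := by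
  rw [Metric.tendsto_atTop] at h
  push_neg at h
  obtain ⟨ε, hε, hfr⟩ := h
  exact ⟨ε, hε, fun i => by obtain ⟨j, hj1, hj2⟩ := hfr i; exact ⟨j, hj1, by rwa [Real.dist_eq] at hj2⟩⟩

theorem tendsto_of_abs_lt_inv {u : ℕ → ℝ} {x : ℝ} (h : ∀ m : ℕ, |u m - x| < 1/(m+1)) :
    Tendsto u atTop (𝓝 x) := by
  rw [tendsto_iff_dist_tendsto_zero]
  apply squeeze_zero (fun m => dist_nonneg) (fun m => le_of_lt (by rw [Real.dist_eq]; exact h m))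
  exact tendsto_one_div_add_atTop_nhds_zero_nat

theorem abs_tendsto_sub {g : ℕ → ℝ} {s L : ℝ} (hg : Tendsto g atTop (𝓝 s)) :
    Tendsto (fun i => |g i - L|) atTop (𝓝 (|s - L|)) :=
  (continuous_abs.tendsto _).comp (hg.sub_const L)

theorem isClosed_Zset (p : ℝ → ℝ) : IsClosed (Zset p) := by
  rw [← isOpen_compl_iff, Metric.isOpen_iff]
  intro x hx
  simp only [Zset, mem_compl_iff, mem_setOf_eq, not_forall, not_exists, not_and, not_lt] at hx
  obtain ⟨δ, hδ, K, hK⟩ := hx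
  refine ⟨δ/2, by linarith, fun x' hx' => ?_⟩
  simp only [Zset, mem_compl_iff, mem_setOf_eq, not_forall, not_exists, not_and, not_lt]
  rw [mem_ball, Real.dist_eq] at hx'
  refine ⟨δ/2, by linarith, K, fun y hy => hK y ?_⟩
  have := abs_sub_abs_le_abs_sub (y - x) (y - x')
  calc |y - x| = |(y - x') + (x' - x)| := by ring_nf
    _ ≤ |y - x'| + |x' - x| := abs_add_le _ _
    _ < δ := by linarith

theorem notZ_continuousAt {p : ℝ → ℝ} (hbsc : BSC p) {x : ℝ} (hx : x ∉ Zset p) :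
    ContinuousAt p x := by
  simp only [Zset, mem_setOf_eq, not_forall, not_exists, not_and, not_lt] at hx
  obtain ⟨δ, hδ, K, hK⟩ := hx
  rw [ContinuousAt, tendsto_iff_seq_tendsto]
  intro u hu
  by_contra hnot
  obtain ⟨ε, hε, hfreq⟩ := not_tendsto_freq hnot
  obtain ⟨i₀, hi₀⟩ := Metric.tendsto_atTop.mp hu δ hδ
  have hsel : ∀ i, ∃ j, i ≤ j ∧ (ε ≤ |p (u j) - p x| ∧ |u j - x| < δ) := by
    intro i
    obtain ⟨j, hj1, hj2⟩ := hfreq (max i i₀)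
    refine ⟨j, le_trans (le_max_left _ _) hj1, hj2, ?_⟩
    have := hi₀ j (le_trans (le_max_right _ _) hj1)
    rwa [Real.dist_eq] at this
  obtain ⟨m, hm, hmi⟩ := select hsel
  obtain ⟨φ, hφ, s, hgs⟩ := extract (g := fun i => p (u (m i))) (B := K)
    (fun i => hK _ (hm i).2)
  have hmφ : Tendsto (fun i => m (φ i)) atTop atTop :=
    tendsto_atTop_mono (fun i => le_trans (hφ.le_apply) (hmi (φ i))) tendsto_id
  have hux : Tendsto (fun i => u (m (φ i))) atTop (𝓝 x) := hu.comp hmφ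
  have hs : s = p x := hbsc x _ s hux hgs
  have hlim := abs_tendsto_sub (L := p x) hgs
  have hge : ε ≤ |s - p x| :=
    ge_of_tendsto hlim (Eventually.of_forall (fun i => (hm (φ i)).1))
  rw [hs, sub_self, abs_zero] at hge
  linarith

theorem sweep_const {f₀ p : ℝ → ℝ} (hFc : ∀ c, Continuous fun x => f₀ (p x + c)) {w : ℝ}
    (hsw : ∀ δ > 0, ∃ R, ∀ s, R ≤ s → ∃ x, |x - w| < δ ∧ p x = s) : ∀ z, f₀ z = f₀ (p w) := by
  have key : ∀ c, Tendsto (fun s => f₀ (s + c)) atTop (𝓝 (f₀ (p w + c))) := by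
    intro c
    rw [Metric.tendsto_atTop]
    intro ε hε
    have hc : ContinuousAt (fun x => f₀ (p x + c)) w := (hFc c).continuousAt
    rw [Metric.continuousAt_iff] at hc
    obtain ⟨δ, hδ, hcδ⟩ := hc ε hε
    obtain ⟨R, hR⟩ := hsw δ hδ
    refine ⟨R, fun s hs => ?_⟩
    obtain ⟨x, hxw, hpx⟩ := hR s hs
    have := hcδ (show dist x w < δ by rw [Real.dist_eq]; exact hxw)
    rwa [hpx] at this
  have k0 : Tendsto f₀ atTop (𝓝 (f₀ (p w))) := by simpa using key 0
  intro z
  have h1 : Tendsto (fun s => f₀ (s + (z - p w))) atTop (𝓝 (f₀ (p w))) :=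
    k0.comp (tendsto_atTop_add_const_right _ _ tendsto_id)
  have h2 := key (z - p w)
  have := tendsto_nhds_unique h2 h1
  rw [add_sub_cancel] at this
  exact this.symm ▸ (by rw [← this])

theorem rel {p f : ℝ → ℝ} (hf : Continuous f) (hFc : ∀ c, Continuous fun x => f (p x + c))
    {x : ℝ} {u : ℕ → ℝ} (hu : Tendsto u atTop (𝓝 x)) {s : ℝ}
    (hs : Tendsto (fun i => p (u i)) atTop (𝓝 s)) : Function.Periodic f (s - p x) := by
  intro z
  have h1 : Tendsto (fun i => f (p (u i) + (z - p x))) atTop (𝓝 (f (p x + (z - p x)))) :=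
    ((hFc (z - p x)).tendsto x).comp hu
  have h2 : Tendsto (fun i => f (p (u i) + (z - p x))) atTop (𝓝 (f (s + (z - p x)))) :=
    (hf.tendsto _).comp (hs.add_const _)
  have heq := tendsto_nhds_unique h2 h1
  have e1 : p x + (z - p x) = z := by ring
  have e2 : z + (s - p x) = s + (z - p x) := by ring
  rw [e1] at heq
  rw [e2, heq]


/-- Inverse step: if `f₀` has nonzero derivative at `a = r xq`, `r` is continuous at `xq`,
and `f₀ ∘ r` is `C^n` at `xq`, then `r` is `C^n` at `xq`. -/
theorem inv_step {n : ℕ∞} (hn : (1:WithTop ℕ∞) ≤ (n:WithTop ℕ∞)) {f₀ : ℝ → ℝ} (hf₀ : ContDiff ℝ n f₀)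
    {a : ℝ} (ha : deriv f₀ a ≠ 0) {r : ℝ → ℝ} {xq : ℝ} (hr : ContinuousAt r xq) (hra : r xq = a)
    (hF : ContDiffAt ℝ n (fun y => f₀ (r y)) xq) : ContDiffAt ℝ n r xq := by
  replace hn : (n:WithTop ℕ∞) ≠ 0 := (lt_of_lt_of_le zero_lt_one hn).ne'
  have hda : HasDerivAt f₀ (deriv f₀ a) a :=
    ((hf₀.differentiable hn) a).hasDerivAt
  have hfd : HasFDerivAt f₀
      ((ContinuousLinearEquiv.unitsEquivAut ℝ (Units.mk0 _ ha)) : ℝ →L[ℝ] ℝ) a :=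
    hda.hasFDerivAt_equiv ha
  have hca : ContDiffAt ℝ n f₀ a := hf₀.contDiffAt
  have hg : ContDiffAt ℝ n (hca.localInverse hfd hn) (f₀ a) := hca.to_localInverse hfd hn
  have hgl : ∀ᶠ y in 𝓝 a, (hca.localInverse hfd hn) (f₀ y) = y :=
    (hca.hasStrictFDerivAt' hfd hn).eventually_left_inverse
  have hra' : Tendsto r (𝓝 xq) (𝓝 a) := by rw [← hra]; exact hr
  have hev : ∀ᶠ y in 𝓝 xq, (hca.localInverse hfd hn) (f₀ (r y)) = r y := hra'.eventually hgl
  have hg' : ContDiffAt ℝ n (hca.localInverse hfd hn) (f₀ (r xq)) := by rw [hra]; exact hg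
  have hcomp : ContDiffAt ℝ n (fun y => (hca.localInverse hfd hn) (f₀ (r y))) xq :=
    hg'.comp xq hF
  exact hcomp.congr_of_eventuallyEq (by filter_upwards [hev] with y hy using hy.symm)

theorem oriented {f₀ p : ℝ → ℝ}
    (hFc : ∀ c, Continuous fun x => f₀ (p x + c)) (hbsc : BSC p)
    {z₀ M₀ r : ℝ} (hr : 0 < r) (hz : z₀ ∈ Zset p)
    (hbd : ∀ x ∈ Zset p, |x - z₀| < r → |p x| ≤ M₀)
    (hy : ∀ j : ℕ, ∃ y', z₀ < y' ∧ y' - z₀ < min r (1/(j+1)) ∧ M₀ + 1 + j < p y') :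
    ∃ k, ∀ z, f₀ z = k := by
  choose y hy1 hy2 hy3 using hy
  have hyr : ∀ j, y j - z₀ < r := fun j => lt_of_lt_of_le (hy2 j) (min_le_left _ _)
  have hynZ : ∀ j, y j ∉ Zset p := by
    intro j hmem
    have h1 : |y j - z₀| < r := by rw [abs_of_pos (by linarith [hy1 j])]; exact hyr j
    have h2 := hbd _ hmem h1
    have h3 : p (y j) ≤ |p (y j)| := le_abs_self _
    have : (0:ℝ) ≤ j := Nat.cast_nonneg j
    linarith [hy3 j]
  set S : ℕ → Set ℝ := fun j => Zset p ∩ Icc z₀ (y j) with hS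
  have hSne : ∀ j, (S j).Nonempty := fun j => ⟨z₀, hz, le_refl _, le_of_lt (hy1 j)⟩
  have hSbdd : ∀ j, BddAbove (S j) := fun j => BddAbove.mono inter_subset_right bddAbove_Icc
  have hScl : ∀ j, IsClosed (S j) := fun j => (isClosed_Zset p).inter isClosed_Icc
  set z : ℕ → ℝ := fun j => sSup (S j) with hzdef
  have hzS : ∀ j, z j ∈ S j := fun j => (hScl j).csSup_mem (hSne j) (hSbdd j)
  have hzZ : ∀ j, z j ∈ Zset p := fun j => (hzS j).1
  have hz₀z : ∀ j, z₀ ≤ z j := fun j => (hzS j).2.1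
  have hzy : ∀ j, z j ≤ y j := fun j => (hzS j).2.2
  have hzy' : ∀ j, z j < y j :=
    fun j => lt_of_le_of_ne (hzy j) (fun h => hynZ j (h ▸ hzZ j))
  have hgap : ∀ j, ∀ w ∈ Ioc (z j) (y j), w ∉ Zset p := by
    intro j w hw hmem
    exact absurd (le_csSup (hSbdd j) ⟨hmem, le_trans (hz₀z j) (le_of_lt hw.1), hw.2⟩)
      (not_le.mpr hw.1)
  have hpcont : ∀ j, ∀ w ∈ Ioc (z j) (y j), ContinuousAt p w :=
    fun j w hw => notZ_continuousAt hbsc (hgap j w hw)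
  have hPz : ∀ j, |p (z j)| ≤ M₀ := by
    intro j
    apply hbd _ (hzZ j)
    rw [abs_of_nonneg (sub_nonneg.mpr (hz₀z j))]
    linarith [hzy j, hyr j]
  -- main dichotomy
  suffices hsw : ∃ w, ∀ δ > 0, ∃ R, ∀ s, R ≤ s → ∃ x, |x - w| < δ ∧ p x = s by
    obtain ⟨w, hw⟩ := hsw
    exact ⟨f₀ (p w), sweep_const hFc hw⟩
  by_cases HC : ∃ j, ∀ x ∈ Ioc (z j) (y j), M₀ + 1 < p x
  · -- p blows up at (z j)⁺ : sweep at z j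
    obtain ⟨j, hj⟩ := HC
    have hup : ∀ K, ∃ η > 0, z j + η ≤ y j ∧ ∀ x, z j < x → x ≤ z j + η → K < p x := by
      intro K
      by_contra hK
      push_neg at hK
      have hsel : ∀ i : ℕ, ∃ xx, z j < xx ∧ xx ≤ z j + min (y j - z j) (1/(i+1)/2) ∧ p xx ≤ K := by
        intro i
        have hpos : 0 < min (y j - z j) (1/(i+1)/2) := by
          apply lt_min (by linarith [hzy' j]) (by positivity)
        obtain ⟨xx, h1, h2, h3⟩ := hK _ hpos (by
          have := min_le_left (y j - z j) (1/(i+1)/2); linarith)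
        exact ⟨xx, h1, h2, h3⟩
      choose xx hx1 hx2 hx3 using hsel
      have hxIoc : ∀ i, xx i ∈ Ioc (z j) (y j) := by
        intro i
        refine ⟨hx1 i, ?_⟩
        have := min_le_left (y j - z j) (1/(i+1)/2)
        linarith [hx2 i]
      have hxz : Tendsto xx atTop (𝓝 (z j)) := by
        apply tendsto_of_abs_lt_inv
        intro m
        rw [abs_of_pos (by linarith [hx1 m])]
        have h1 := min_le_right (y j - z j) (1/(m+1)/2)
        have h2 := hx2 m
        have h3 := hx1 m
        have h4 : (0:ℝ) < 1/(m+1) := by positivity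
        linarith
      have hlow : ∀ i, M₀ + 1 < p (xx i) := fun i => hj _ (hxIoc i)
      have hbound : ∀ i, |p (xx i)| ≤ |K| + |M₀| + 2 := by
        intro i
        have h1 := hlow i
        have h2 := hx3 i
        have := le_abs_self K
        have := neg_abs_le M₀
        rw [abs_le]
        constructor <;> nlinarith [abs_nonneg K, abs_nonneg M₀]
      obtain ⟨φ, hφ, s, hgs⟩ := extract hbound
      have hs : s = p (z j) := hbsc (z j) _ s (hxz.comp hφ.tendsto_atTop) hgs
      have hge : M₀ + 1 ≤ s :=
        ge_of_tendsto hgs (Eventually.of_forall (fun i => le_of_lt (hlow (φ i))))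
      have := hPz j
      have : p (z j) ≤ |p (z j)| := le_abs_self _
      linarith [hPz j]
    refine ⟨z j, fun δ hδ => ?_⟩
    set mm : ℝ := min (δ/2) (y j - z j) with hmm
    have hmmpos : 0 < mm := lt_min (by linarith) (by linarith [hzy' j])
    set x₁ : ℝ := z j + mm with hx₁
    have hx₁Ioc : x₁ ∈ Ioc (z j) (y j) := by
      constructor
      · simp only [hx₁]; linarith
      · simp only [hx₁]; have := min_le_right (δ/2) (y j - z j); linarith
    refine ⟨p x₁, fun s hs => ?_⟩
    obtain ⟨η, hη, hηy, hηK⟩ := hup s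
    set x₂ : ℝ := z j + min η mm with hx₂
    have hx₂pos : z j < x₂ := by simp only [hx₂]; have := lt_min hη hmmpos; linarith
    have hx₂η : x₂ ≤ z j + η := by simp only [hx₂]; have := min_le_left η mm; linarith
    have hx₂₁ : x₂ ≤ x₁ := by simp only [hx₂, hx₁]; have := min_le_right η mm; linarith
    have hps : s < p x₂ := hηK x₂ hx₂pos hx₂η
    have hsub : Icc x₂ x₁ ⊆ Ioc (z j) (y j) := fun t ht =>
      ⟨lt_of_lt_of_le hx₂pos ht.1, le_trans ht.2 hx₁Ioc.2⟩
    have hcont : ContinuousOn p (Icc x₂ x₁) :=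
      fun t ht => ((hpcont j t (hsub ht)).continuousWithinAt)
    have hmem : s ∈ Icc (p x₁) (p x₂) := ⟨hs, le_of_lt hps⟩
    obtain ⟨x, hxI, hpx⟩ := intermediate_value_Icc' hx₂₁ hcont hmem
    refine ⟨x, ?_, hpx⟩
    have h1 : z j < x := lt_of_lt_of_le hx₂pos hxI.1
    have h2 : x ≤ x₁ := hxI.2
    rw [abs_of_pos (by linarith)]
    have : mm ≤ δ/2 := min_le_left _ _
    simp only [hx₁] at h2
    linarith
  · -- sweep at z₀
    push_neg at HC
    choose x₀ hx₀ hx₀p using HC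
    refine ⟨z₀, fun δ hδ => ?_⟩
    refine ⟨M₀ + 1, fun s hs => ?_⟩
    -- choose j large enough
    obtain ⟨j, hj1, hj2⟩ : ∃ j : ℕ, 1/((j:ℝ)+1) < δ ∧ s ≤ M₀ + 1 + j := by
      refine ⟨max ⌈1/δ⌉₊ ⌈s - M₀ - 1⌉₊, ?_, ?_⟩
      · have h1 : (1:ℝ)/δ ≤ (⌈1/δ⌉₊ : ℝ) := Nat.le_ceil _
        have h2 : ((⌈1/δ⌉₊ : ℕ) : ℝ) ≤ ((max ⌈1/δ⌉₊ ⌈s - M₀ - 1⌉₊ : ℕ) : ℝ) := by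
          exact_mod_cast le_max_left _ _
        rw [div_lt_iff₀ (by positivity)]
        have h3 : (1:ℝ)/δ < (max ⌈1/δ⌉₊ ⌈s - M₀ - 1⌉₊ : ℕ) + 1 := by linarith
        calc (1:ℝ) = δ * (1/δ) := by field_simp
          _ < δ * ((max ⌈1/δ⌉₊ ⌈s - M₀ - 1⌉₊ : ℕ) + 1) := by
              apply mul_lt_mul_of_pos_left h3 hδ
      · have h1 : s - M₀ - 1 ≤ (⌈s - M₀ - 1⌉₊ : ℝ) := Nat.le_ceil _
        have h2 : ((⌈s - M₀ - 1⌉₊ : ℕ) : ℝ) ≤ ((max ⌈1/δ⌉₊ ⌈s - M₀ - 1⌉₊ : ℕ) : ℝ) := by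
          exact_mod_cast le_max_right _ _
        linarith
    have hxy : x₀ j ≤ y j := (hx₀ j).2
    have hsmem : s ∈ Icc (p (x₀ j)) (p (y j)) := by
      constructor
      · linarith [hx₀p j]
      · linarith [hy3 j]
    have hsub : Icc (x₀ j) (y j) ⊆ Ioc (z j) (y j) := fun t ht =>
      ⟨lt_of_lt_of_le (hx₀ j).1 ht.1, ht.2⟩
    have hcont : ContinuousOn p (Icc (x₀ j) (y j)) :=
      fun t ht => ((hpcont j t (hsub ht)).continuousWithinAt)
    obtain ⟨x, hxI, hpx⟩ := intermediate_value_Icc hxy hcont hsmem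
    refine ⟨x, ?_, hpx⟩
    have h1 : z₀ < x := lt_of_lt_of_le (lt_of_le_of_lt (hz₀z j) (lt_of_lt_of_le (hx₀ j).1 hxI.1)) le_rfl
    have h2 : x - z₀ ≤ y j - z₀ := by linarith [hxI.2]
    have h3 : y j - z₀ < 1/((j:ℝ)+1) := lt_of_lt_of_le (hy2 j) (min_le_right _ _)
    rw [abs_of_pos (by linarith)]
    linarith


theorem zset_neg {p : ℝ → ℝ} {x : ℝ} : x ∈ Zset (fun w => -(p w)) ↔ x ∈ Zset p := by
  simp only [Zset, mem_setOf_eq, abs_neg]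

theorem zset_comp_neg {p : ℝ → ℝ} {x : ℝ} : x ∈ Zset (fun w => p (-w)) ↔ -x ∈ Zset p := by
  simp only [Zset, mem_setOf_eq]
  constructor
  · intro h δ hδ K
    obtain ⟨y, h1, h2⟩ := h δ hδ K
    exact ⟨-y, by rw [show -y - -x = -(y - x) by ring, abs_neg]; exact h1, h2⟩
  · intro h δ hδ K
    obtain ⟨y, h1, h2⟩ := h δ hδ K
    exact ⟨-y, by rw [show -y - x = -(y - -x) by ring, abs_neg]; exact h1, by rwa [neg_neg]⟩

theorem bsc_neg {p : ℝ → ℝ} (h : BSC p) : BSC (fun w => -(p w)) := by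
  intro x u s hu hs
  have : Tendsto (fun i => p (u i)) atTop (𝓝 (-s)) := by
    have := hs.neg; simpa using this
  have := h x u (-s) hu this
  simp only []
  linarith [this]

theorem bsc_comp_neg {p : ℝ → ℝ} (h : BSC p) : BSC (fun w => p (-w)) := by
  intro x u s hu hs
  have hun : Tendsto (fun i => -(u i)) atTop (𝓝 (-x)) := hu.neg
  exact h (-x) (fun i => -(u i)) s hun (by simpa using hs)

theorem mlemma {n : ℕ∞} (hn : n = 0 ∨ (1:WithTop ℕ∞) ≤ (n:WithTop ℕ∞)) {p : ℝ → ℝ}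
    (hp : ¬ ContDiff ℝ n p)
    {f₀ : ℝ → ℝ} (hf₀ : ContDiff ℝ n f₀) (hf₀c : ∀ c, ContDiff ℝ n fun x => f₀ (p x + c))
    {b₀ : ℝ} (hb₀ : f₀ b₀ ≠ f₀ 0) (hbsc : BSC p) : False := by
  by_cases hZ : (Zset p).Nonempty
  case neg =>
    have hpc : Continuous p := continuous_iff_continuousAt.mpr
      (fun x => notZ_continuousAt hbsc (fun hx => hZ ⟨x, hx⟩))
    rcases hn with hn0 | hn1
    · exact hp (by rw [hn0]; exact contDiff_zero.mpr hpc)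
    · have ha : ∃ a, deriv f₀ a ≠ 0 := by
        by_contra h
        push_neg at h
        exact hb₀ (is_const_of_deriv_eq_zero (hf₀.differentiable (lt_of_lt_of_le zero_lt_one hn1).ne') h b₀ 0)
      obtain ⟨a, ha⟩ := ha
      apply hp
      rw [contDiff_iff_contDiffAt]
      intro x
      have h1 : ContDiffAt ℝ n (fun w => p w + (a - p x)) x :=
        inv_step hn1 hf₀ ha (hpc.continuousAt.add continuousAt_const) (by ring)
          ((hf₀c (a - p x)).contDiffAt)
      have h2 := h1.sub (contDiffAt_const (c := a - p x))
      simpa using h2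
  case pos =>
    obtain ⟨z₀', hz₀'⟩ := hZ
    haveI : Nonempty (Zset p) := ⟨⟨z₀', hz₀'⟩⟩
    haveI := (isClosed_Zset p).completeSpace_coe
    set C : ℕ → Set (Zset p) := fun M => closure {z : Zset p | |p (z : ℝ)| ≤ (M : ℝ)} with hC
    have hCcl : ∀ M, IsClosed (C M) := fun M => isClosed_closure
    have hCU : ⋃ M, C M = univ := by
      rw [eq_univ_iff_forall]
      intro z
      refine mem_iUnion.mpr ⟨⌈|p (z:ℝ)|⌉₊, subset_closure ?_⟩
      simp only [mem_setOf_eq]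
      exact Nat.le_ceil _
    obtain ⟨M₀', hint⟩ := nonempty_interior_of_iUnion_of_closed hCcl hCU
    obtain ⟨xt, hxt⟩ := hint
    have hnhds : C M₀' ∈ 𝓝 xt := mem_interior_iff_mem_nhds.mp hxt
    obtain ⟨r, hr, hball⟩ := Metric.mem_nhds_iff.mp hnhds
    set z₀ : ℝ := (xt : ℝ) with hz₀def
    set M₀ : ℝ := (M₀' : ℝ) with hM₀def
    have hz₀Z : z₀ ∈ Zset p := xt.2
    have hbd : ∀ x ∈ Zset p, |x - z₀| < r → |p x| ≤ M₀ := by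
      intro x hx hxr
      have hmem : (⟨x, hx⟩ : Zset p) ∈ ball xt r := by
        rw [mem_ball, Subtype.dist_eq, Real.dist_eq]
        exact hxr
      obtain ⟨u, hu1, hu2⟩ := mem_closure_iff_seq_limit.mp (hball hmem)
      have hucoe : Tendsto (fun i => ((u i : Zset p) : ℝ)) atTop (𝓝 x) :=
        (continuous_subtype_val.tendsto _).comp hu2
      obtain ⟨φ, hφ, s, hgs⟩ := extract (g := fun i => p (u i)) (B := M₀) (fun i => hu1 i)
      have hux : Tendsto (fun i => ((u (φ i) : Zset p) : ℝ)) atTop (𝓝 x) :=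
        hucoe.comp hφ.tendsto_atTop
      have hs : s = p x := hbsc x _ s hux hgs
      have : |s| ≤ M₀ := by
        have habs : Tendsto (fun i => |p (u (φ i))|) atTop (𝓝 |s|) := by
          have := abs_tendsto_sub (L := 0) hgs
          simpa using this
        exact le_of_tendsto habs (Eventually.of_forall (fun i => hu1 (φ i)))
      rwa [hs] at this
    -- four classes
    have hys : ∀ j : ℕ, ∃ y', |y' - z₀| < min r (1/(j+1)) ∧ M₀ + 1 + j < |p y'| := by
      intro j
      exact hz₀Z (min r (1/(j+1))) (lt_min hr (by positivity)) (M₀ + 1 + j)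
    have hpz₀ : |p z₀| ≤ M₀ := hbd z₀ hz₀Z (by simpa using hr)
    set P₁ : ℕ → Prop := fun j => ∃ y', z₀ < y' ∧ y' - z₀ < min r (1/(j+1)) ∧ M₀ + 1 + j < p y' with hP₁
    set P₂ : ℕ → Prop := fun j => ∃ y', z₀ < y' ∧ y' - z₀ < min r (1/(j+1)) ∧ M₀ + 1 + j < -(p y') with hP₂
    set P₃ : ℕ → Prop := fun j => ∃ y', y' < z₀ ∧ z₀ - y' < min r (1/(j+1)) ∧ M₀ + 1 + j < p y' with hP₃
    set P₄ : ℕ → Prop := fun j => ∃ y', y' < z₀ ∧ z₀ - y' < min r (1/(j+1)) ∧ M₀ + 1 + j < -(p y') with hP₄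
    have hall : ∀ j, P₁ j ∨ P₂ j ∨ P₃ j ∨ P₄ j := by
      intro j
      obtain ⟨y', h1, h2⟩ := hys j
      have hyne : y' ≠ z₀ := by
        intro heq
        have h5 : |p y'| ≤ M₀ := by rw [heq]; exact hpz₀
        have : (0:ℝ) ≤ j := Nat.cast_nonneg j
        linarith
      rcases lt_or_gt_of_ne hyne with hlt | hgt
      · -- y' < z₀
        rcases lt_abs.mp h2 with hp1 | hp2
        · exact Or.inr (Or.inr (Or.inl ⟨y', hlt, by rwa [abs_of_neg (by linarith : y' - z₀ < 0), neg_sub] at h1, hp1⟩))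
        · exact Or.inr (Or.inr (Or.inr ⟨y', hlt, by rwa [abs_of_neg (by linarith : y' - z₀ < 0), neg_sub] at h1, hp2⟩))
      · rcases lt_abs.mp h2 with hp1 | hp2
        · exact Or.inl ⟨y', hgt, by rwa [abs_of_pos (by linarith : (0:ℝ) < y' - z₀)] at h1, hp1⟩
        · exact Or.inr (Or.inl ⟨y', hgt, by rwa [abs_of_pos (by linarith : (0:ℝ) < y' - z₀)] at h1, hp2⟩)
    have hminmono : ∀ (j' j : ℕ), j' ≤ j → min r (1/((j:ℝ)+1)) ≤ min r (1/((j':ℝ)+1)) := by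
      intro j' j hj
      apply min_le_min le_rfl
      apply one_div_le_one_div_of_le (by positivity)
      have : (j':ℝ) ≤ j := by exact_mod_cast hj
      linarith
    have hcastmono : ∀ (j' j : ℕ), j' ≤ j → M₀ + 1 + (j':ℝ) ≤ M₀ + 1 + j := by
      intro j' j hj
      have : (j':ℝ) ≤ j := by exact_mod_cast hj
      linarith
    have hdec : (∀ j, P₁ j) ∨ (∀ j, P₂ j) ∨ (∀ j, P₃ j) ∨ (∀ j, P₄ j) := by
      by_contra hcon
      push_neg at hcon
      obtain ⟨j₁, hj₁⟩ := hcon.1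
      obtain ⟨j₂, hj₂⟩ := hcon.2.1
      obtain ⟨j₃, hj₃⟩ := hcon.2.2.1
      obtain ⟨j₄, hj₄⟩ := hcon.2.2.2
      set J := max (max j₁ j₂) (max j₃ j₄) with hJ
      rcases hall J with h | h | h | h
      · obtain ⟨y', a1, a2, a3⟩ := h
        exact hj₁ ⟨y', a1, lt_of_lt_of_le a2 (hminmono j₁ J (le_trans (le_max_left _ _) (le_max_left _ _))),
          lt_of_le_of_lt (hcastmono j₁ J (le_trans (le_max_left _ _) (le_max_left _ _))) a3⟩
      · obtain ⟨y', a1, a2, a3⟩ := h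
        exact hj₂ ⟨y', a1, lt_of_lt_of_le a2 (hminmono j₂ J (le_trans (le_max_right _ _) (le_max_left _ _))),
          lt_of_le_of_lt (hcastmono j₂ J (le_trans (le_max_right _ _) (le_max_left _ _))) a3⟩
      · obtain ⟨y', a1, a2, a3⟩ := h
        exact hj₃ ⟨y', a1, lt_of_lt_of_le a2 (hminmono j₃ J (le_trans (le_max_left _ _) (le_max_right _ _))),
          lt_of_le_of_lt (hcastmono j₃ J (le_trans (le_max_left _ _) (le_max_right _ _))) a3⟩
      · obtain ⟨y', a1, a2, a3⟩ := h
        exact hj₄ ⟨y', a1, lt_of_lt_of_le a2 (hminmono j₄ J (le_trans (le_max_right _ _) (le_max_right _ _))),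
          lt_of_le_of_lt (hcastmono j₄ J (le_trans (le_max_right _ _) (le_max_right _ _))) a3⟩
    have hFcont : ∀ c, Continuous fun x => f₀ (p x + c) := fun c => (hf₀c c).continuous
    have hf₀cont : Continuous f₀ := hf₀.continuous
    rcases hdec with h | h | h | h
    · obtain ⟨k, hk⟩ := oriented hFcont hbsc hr hz₀Z hbd h
      exact hb₀ (by rw [hk b₀, hk 0])
    · -- flip sign of p and argument of f₀
      set p' : ℝ → ℝ := fun w => -(p w) with hp'
      set f₀' : ℝ → ℝ := fun u => f₀ (-u) with hf₀'
      have hFc' : ∀ c, Continuous fun x => f₀' (p' x + c) := by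
        intro c
        have := hFcont (-c)
        apply this.congr
        intro x
        simp only [hp', hf₀']
        ring_nf
      have hbsc' : BSC p' := bsc_neg hbsc
      have hZ' : ∀ x, x ∈ Zset p' ↔ x ∈ Zset p := fun x => zset_neg
      have hbd' : ∀ x ∈ Zset p', |x - z₀| < r → |p' x| ≤ M₀ := by
        intro x hx hxr
        have := hbd x ((hZ' x).mp hx) hxr
        simpa [hp'] using this
      have hy' : ∀ j : ℕ, ∃ y', z₀ < y' ∧ y' - z₀ < min r (1/(j+1)) ∧ M₀ + 1 + j < p' y' := by
        intro j
        obtain ⟨y', a1, a2, a3⟩ := h j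
        exact ⟨y', a1, a2, a3⟩
      obtain ⟨k, hk⟩ := oriented hFc' hbsc' hr ((hZ' z₀).mpr hz₀Z) hbd' hy'
      apply hb₀
      have e1 : f₀ b₀ = f₀' (-b₀) := by simp [hf₀']
      have e2 : f₀ 0 = f₀' 0 := by simp [hf₀']
      rw [e1, e2, hk (-b₀), hk 0]
    · -- reflect domain
      set p' : ℝ → ℝ := fun w => p (-w) with hp'
      have hFc' : ∀ c, Continuous fun x => f₀ (p' x + c) := by
        intro c
        exact (hFcont c).comp continuous_neg
      have hbsc' : BSC p' := bsc_comp_neg hbsc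
      have hz₀' : -z₀ ∈ Zset p' := by rw [zset_comp_neg, neg_neg]; exact hz₀Z
      have hbd' : ∀ x ∈ Zset p', |x - (-z₀)| < r → |p' x| ≤ M₀ := by
        intro x hx hxr
        have h1 : -x ∈ Zset p := zset_comp_neg.mp hx
        have h2 : |(-x) - z₀| < r := by
          rw [show -x - z₀ = -(x - -z₀) by ring, abs_neg]
          exact hxr
        exact hbd _ h1 h2
      have hy' : ∀ j : ℕ, ∃ y', -z₀ < y' ∧ y' - (-z₀) < min r (1/(j+1)) ∧ M₀ + 1 + j < p' y' := by
        intro j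
        obtain ⟨y', a1, a2, a3⟩ := h j
        refine ⟨-y', by linarith, by rw [show -y' - -z₀ = z₀ - y' by ring]; exact a2, ?_⟩
        simpa [hp'] using a3
      obtain ⟨k, hk⟩ := oriented hFc' hbsc' hr hz₀' hbd' hy'
      exact hb₀ (by rw [hk b₀, hk 0])
    · -- both
      set p' : ℝ → ℝ := fun w => -(p (-w)) with hp'
      set f₀' : ℝ → ℝ := fun u => f₀ (-u) with hf₀'
      have hFc' : ∀ c, Continuous fun x => f₀' (p' x + c) := by
        intro c
        have := (hFcont (-c)).comp continuous_neg
        apply this.congr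
        intro x
        simp only [hp', hf₀', Function.comp]
        ring_nf
      have hbsc' : BSC p' := bsc_neg (bsc_comp_neg hbsc)
      have hZ'iff : ∀ x, x ∈ Zset p' ↔ -x ∈ Zset p := by
        intro x
        rw [show p' = (fun w => -((fun v => p (-v)) w)) from rfl]
        rw [zset_neg (p := fun v => p (-v)), zset_comp_neg]
      have hz₀' : -z₀ ∈ Zset p' := by rw [hZ'iff, neg_neg]; exact hz₀Z
      have hbd' : ∀ x ∈ Zset p', |x - (-z₀)| < r → |p' x| ≤ M₀ := by
        intro x hx hxr
        have h1 : -x ∈ Zset p := (hZ'iff x).mp hx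
        have h2 : |(-x) - z₀| < r := by
          rw [show -x - z₀ = -(x - -z₀) by ring, abs_neg]
          exact hxr
        have := hbd _ h1 h2
        simpa [hp'] using this
      have hy' : ∀ j : ℕ, ∃ y', -z₀ < y' ∧ y' - (-z₀) < min r (1/(j+1)) ∧ M₀ + 1 + j < p' y' := by
        intro j
        obtain ⟨y', a1, a2, a3⟩ := h j
        refine ⟨-y', by linarith, by rw [show -y' - -z₀ = z₀ - y' by ring]; exact a2, ?_⟩
        simpa [hp'] using a3
      obtain ⟨k, hk⟩ := oriented hFc' hbsc' hr hz₀' hbd' hy'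
      apply hb₀
      have e1 : f₀ b₀ = f₀' (-b₀) := by simp [hf₀']
      have e2 : f₀ 0 = f₀' 0 := by simp [hf₀']
      rw [e1, e2, hk (-b₀), hk 0]


theorem round_eq_of_abs_lt {x : ℝ} {N : ℤ} (h : |x - N| < 1/2) : round x = N := by
  have h1 : round (x - N + N) = round (x - N) + N := round_add_intCast _ _
  rw [sub_add_cancel] at h1
  rw [h1, round_eq_zero_iff.mpr ⟨by linarith [abs_lt.mp h], by linarith [abs_lt.mp h]⟩]
  simp

theorem step5 {n : ℕ∞} (hn : n = 0 ∨ (1:WithTop ℕ∞) ≤ (n:WithTop ℕ∞)) {p f₀ : ℝ → ℝ}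
    (hf₀ : ContDiff ℝ n f₀) (hf₀c : ∀ c, ContDiff ℝ n fun x => f₀ (p x + c))
    {b₀ : ℝ} (hb₀ : f₀ b₀ ≠ f₀ 0)
    {d₀ : ℝ} (hd₀ : 0 < d₀) (hper : ∀ τ, Function.Periodic f₀ τ ↔ ∃ N : ℤ, τ = N * d₀)
    (x : ℝ) :
    ∃ δ > 0, ∃ q : ℝ → ℝ, ContinuousOn q (ball x δ) ∧ (∀ y ∈ ball x δ, ContDiffAt ℝ n q y) ∧
      q x = p x ∧ ∀ y ∈ ball x δ, (|q y - p x| < d₀/4 ∧ ∃ N : ℤ, p y - q y = N * d₀) := by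
  have hf₀cont : Continuous f₀ := hf₀.continuous
  have hFcont : ∀ c, Continuous fun w => f₀ (p w + c) := fun c => (hf₀c c).continuous
  have hperiod : ∀ (N : ℤ) (z : ℝ), f₀ (z + N * d₀) = f₀ z := by
    intro N z
    exact (hper (N * d₀)).mpr ⟨N, rfl⟩ z
  -- Step 5.1 : mod continuity at x
  have key : ∃ δ > 0, ∀ y ∈ ball x δ, ∃ N : ℤ, |p y - p x - N * d₀| < d₀/4 := by
    by_contra h
    push_neg at h
    have hsel : ∀ i : ℕ, ∃ y', y' ∈ ball x (1/(i+1)) ∧ ∀ N : ℤ, d₀/4 ≤ |p y' - p x - N * d₀| := by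
      intro i
      obtain ⟨y', h1, h2⟩ := h (1/(i+1)) (by positivity)
      exact ⟨y', h1, h2⟩
    choose y hy hbad using hsel
    have hyx : Tendsto y atTop (𝓝 x) := by
      apply tendsto_of_abs_lt_inv
      intro m
      have := hy m
      rwa [mem_ball, Real.dist_eq] at this
    set g : ℕ → ℝ := fun i => p (y i) - d₀ * ⌊(p (y i) - p x)/d₀⌋ with hg
    have hgper : ∀ i (c : ℝ), f₀ (g i + c) = f₀ (p (y i) + c) := by
      intro i c
      have := hperiod ⌊(p (y i) - p x)/d₀⌋ (g i + c)
      rw [← this]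
      congr 1
      simp only [hg]
      ring
    have hgmem : ∀ i, 0 ≤ g i - p x ∧ g i - p x < d₀ := by
      intro i
      have h1 : g i - p x = d₀ * Int.fract ((p (y i) - p x)/d₀) := by
        simp only [hg, Int.fract]
        field_simp
        ring
      constructor
      · rw [h1]; exact mul_nonneg (le_of_lt hd₀) (Int.fract_nonneg _)
      · rw [h1]
        calc d₀ * Int.fract ((p (y i) - p x)/d₀) < d₀ * 1 :=
              (mul_lt_mul_iff_right₀ hd₀).mpr (Int.fract_lt_one _)
          _ = d₀ := mul_one d₀
    have hgbd : ∀ i, |g i| ≤ |p x| + d₀ := by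
      intro i
      obtain ⟨h1, h2⟩ := hgmem i
      rw [abs_le]
      constructor
      · have := neg_abs_le (p x); linarith
      · have := le_abs_self (p x); linarith
    obtain ⟨φ, hφ, s, hgs⟩ := extract hgbd
    have hyxφ : Tendsto (fun i => y (φ i)) atTop (𝓝 x) := hyx.comp hφ.tendsto_atTop
    have heq : ∀ c, f₀ (s + c) = f₀ (p x + c) := by
      intro c
      have h1 : Tendsto (fun i => f₀ (g (φ i) + c)) atTop (𝓝 (f₀ (s + c))) :=
        (hf₀cont.tendsto _).comp (hgs.add_const c)
      have h2 : Tendsto (fun i => f₀ (g (φ i) + c)) atTop (𝓝 (f₀ (p x + c))) := by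
        have h3 : (fun i => f₀ (g (φ i) + c)) = fun i => f₀ (p (y (φ i)) + c) := by
          funext i; exact hgper (φ i) c
        rw [h3]
        exact ((hFcont c).tendsto _).comp hyxφ
      exact tendsto_nhds_unique h1 h2
    have hper2 : Function.Periodic f₀ (s - p x) := by
      intro z
      have := heq (z - p x)
      calc f₀ (z + (s - p x)) = f₀ (s + (z - p x)) := by ring_nf
        _ = f₀ (p x + (z - p x)) := this
        _ = f₀ z := by ring_nf
    obtain ⟨N, hN⟩ := (hper _).mp hper2
    -- contradiction
    have hge : ∀ i, d₀/4 ≤ |g (φ i) - p x - N * d₀| := by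
      intro i
      have := hbad (φ i) (N + ⌊(p (y (φ i)) - p x)/d₀⌋)
      push_cast at this
      have he : p (y (φ i)) - p x - ((N : ℝ) + (⌊(p (y (φ i)) - p x)/d₀⌋ : ℝ)) * d₀
          = g (φ i) - p x - N * d₀ := by
        simp only [hg]
        ring
      rwa [he] at this
    have hlim : Tendsto (fun i => |g (φ i) - p x - N * d₀|) atTop (𝓝 (|s - (p x + N * d₀)|)) := by
      have := abs_tendsto_sub (L := p x + N * d₀) hgs
      simpa [sub_sub] using this
    have : d₀/4 ≤ |s - (p x + N * d₀)| := ge_of_tendsto hlim (Eventually.of_forall hge)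
    rw [show s - (p x + N * d₀) = (s - p x) - N * d₀ by ring, hN, sub_self, abs_zero] at this
    linarith
  obtain ⟨δ, hδ, hkey⟩ := key
  choose! NN hNN using hkey
  obtain ⟨q, hq⟩ : ∃ q : ℝ → ℝ, q = fun y => p y - d₀ * round ((p y - p x)/d₀) := ⟨_, rfl⟩
  have hq1 : ∀ y ∈ ball x δ, |q y - p x| < d₀/4 ∧ p y - q y = (round ((p y - p x)/d₀) : ℤ) * d₀ := by
    intro y hy
    have hNy := hNN y hy
    have hround : round ((p y - p x)/d₀) = NN y := by
      apply round_eq_of_abs_lt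
      rw [show (p y - p x)/d₀ - (NN y : ℝ) = (p y - p x - NN y * d₀)/d₀ by field_simp]
      rw [abs_div, abs_of_pos hd₀, div_lt_iff₀ hd₀]
      calc |p y - p x - NN y * d₀| < d₀/4 := hNy
        _ ≤ 1/2 * d₀ := by linarith
    constructor
    · rw [show q y - p x = p y - p x - d₀ * round ((p y - p x)/d₀) by simp only [hq]; ring]
      rw [hround]
      rw [show p y - p x - d₀ * (NN y : ℝ) = p y - p x - (NN y : ℝ) * d₀ by ring]
      exact hNy
    · simp only [hq]; ring
  have hqx : q x = p x := by
    simp only [hq, sub_self, zero_div]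
    norm_num
  have hqper : ∀ y ∈ ball x δ, ∀ c, f₀ (q y + c) = f₀ (p y + c) := by
    intro y hy c
    obtain ⟨-, h2⟩ := hq1 y hy
    have e : p y + c = q y + c + (round ((p y - p x)/d₀) : ℝ) * d₀ := by
      push_cast at h2 ⊢
      linarith
    rw [e, hperiod]
  -- 5.3 continuity of q on ball
  have hqcont : ∀ y ∈ ball x δ, ContinuousAt q y := by
    intro y hy
    rw [ContinuousAt, tendsto_iff_seq_tendsto]
    intro u hu
    by_contra hnot
    obtain ⟨ε, hε, hfreq⟩ := not_tendsto_freq hnot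
    have hev : ∃ i₀, ∀ j ≥ i₀, u j ∈ ball x δ := by
      have := hu.eventually (isOpen_ball.mem_nhds hy)
      rw [eventually_atTop] at this
      exact this
    obtain ⟨i₀, hi₀⟩ := hev
    have hsel : ∀ i, ∃ j, i ≤ j ∧ (ε ≤ |q (u j) - q y| ∧ u j ∈ ball x δ) := by
      intro i
      obtain ⟨j, hj1, hj2⟩ := hfreq (max i i₀)
      exact ⟨j, le_trans (le_max_left _ _) hj1, hj2, hi₀ j (le_trans (le_max_right _ _) hj1)⟩
    obtain ⟨m, hm, hmi⟩ := select hsel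
    have hqbd : ∀ i, |q (u (m i))| ≤ |p x| + d₀ := by
      intro i
      obtain ⟨h1a, h1b⟩ := abs_lt.mp (hq1 _ (hm i).2).1
      rw [abs_le]
      have h2 := le_abs_self (p x)
      have h3 := neg_abs_le (p x)
      constructor <;> linarith
    obtain ⟨φ, hφ, s, hgs⟩ := extract hqbd
    have humφ : Tendsto (fun i => u (m (φ i))) atTop (𝓝 y) :=
      hu.comp (tendsto_atTop_mono (fun i => le_trans hφ.le_apply (hmi (φ i))) tendsto_id)
    have heq : ∀ c, f₀ (s + c) = f₀ (q y + c) := by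
      intro c
      have h1 : Tendsto (fun i => f₀ (q (u (m (φ i))) + c)) atTop (𝓝 (f₀ (s + c))) :=
        (hf₀cont.tendsto _).comp (hgs.add_const c)
      have h2 : Tendsto (fun i => f₀ (q (u (m (φ i))) + c)) atTop (𝓝 (f₀ (q y + c))) := by
        have h3 : (fun i => f₀ (q (u (m (φ i))) + c)) = fun i => f₀ (p (u (m (φ i))) + c) := by
          funext i; exact hqper _ (hm (φ i)).2 c
        rw [h3]
        have h4 : Tendsto (fun i => f₀ (p (u (m (φ i))) + c)) atTop (𝓝 (f₀ (p y + c))) :=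
          ((hFcont c).tendsto _).comp humφ
        rwa [← hqper y hy c] at h4
      exact tendsto_nhds_unique h1 h2
    have hper2 : Function.Periodic f₀ (s - q y) := by
      intro z
      have := heq (z - q y)
      calc f₀ (z + (s - q y)) = f₀ (s + (z - q y)) := by ring_nf
        _ = f₀ (q y + (z - q y)) := this
        _ = f₀ z := by ring_nf
    obtain ⟨N', hN'⟩ := (hper _).mp hper2
    -- |s - q y| ≤ d₀/2 < d₀ so N' = 0
    have hsx : |s - p x| ≤ d₀/4 := by
      have hlim : Tendsto (fun i => |q (u (m (φ i))) - p x|) atTop (𝓝 (|s - p x|)) :=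
        abs_tendsto_sub hgs
      exact le_of_tendsto hlim (Eventually.of_forall (fun i => le_of_lt (hq1 _ (hm (φ i)).2).1))
    have hqyx : |q y - p x| < d₀/4 := (hq1 y hy).1
    have hsqy : |s - q y| ≤ d₀/2 := by
      calc |s - q y| = |(s - p x) - (q y - p x)| := by ring_nf
        _ ≤ |s - p x| + |q y - p x| := abs_sub _ _
        _ ≤ d₀/2 := by linarith
    have hN0 : N' = 0 := by
      by_contra hN0
      have : (1:ℝ) ≤ |(N' : ℝ)| := by
        have : (1:ℤ) ≤ |N'| := Int.one_le_abs hN0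
        exact_mod_cast this
      rw [hN'] at hsqy
      rw [abs_mul, abs_of_pos hd₀] at hsqy
      nlinarith
    rw [hN0] at hN'
    simp at hN'
    have hsy : s = q y := by linarith [sub_eq_zero.mp hN']
    have hlim2 : Tendsto (fun i => |q (u (m (φ i))) - q y|) atTop (𝓝 (|s - q y|)) :=
      abs_tendsto_sub hgs
    have : ε ≤ |s - q y| :=
      ge_of_tendsto hlim2 (Eventually.of_forall (fun i => (hm (φ i)).1))
    rw [hsy, sub_self, abs_zero] at this
    linarith
  -- 5.4 smoothness
  have hqsmooth : ∀ y ∈ ball x δ, ContDiffAt ℝ n q y := by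
    intro y hy
    rcases hn with hn0 | hn1
    · rw [hn0]
      have h0 : ContDiffAt ℝ 0 q y := contDiffAt_zero.mpr
        ⟨ball x δ, isOpen_ball.mem_nhds hy, fun w hw => (hqcont w hw).continuousWithinAt⟩
      exact_mod_cast h0
    · have ha : ∃ a, deriv f₀ a ≠ 0 := by
        by_contra h
        push_neg at h
        exact hb₀ (is_const_of_deriv_eq_zero (hf₀.differentiable (lt_of_lt_of_le zero_lt_one hn1).ne') h b₀ 0)
      obtain ⟨a, ha⟩ := ha
      set c : ℝ := a - q y with hc
      have hF : ContDiffAt ℝ n (fun w => f₀ (q w + c)) y := by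
        apply ((hf₀c c).contDiffAt).congr_of_eventuallyEq
        filter_upwards [isOpen_ball.mem_nhds hy] with w hw
        exact (hqper w hw c)
      have h1 : ContDiffAt ℝ n (fun w => q w + c) y :=
        inv_step hn1 hf₀ ha ((hqcont y hy).add continuousAt_const) (by simp [hc]) hF
      have h2 := h1.sub (contDiffAt_const (c := c))
      simpa using h2
  exact ⟨δ, hδ, q, fun w hw => (hqcont w hw).continuousWithinAt, hqsmooth, hqx,
    fun y hy => ⟨(hq1 y hy).1, ⟨round ((p y - p x)/d₀), (hq1 y hy).2⟩⟩⟩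


theorem step6 {p : ℝ → ℝ} {d₀ d : ℝ} (hd₀ : 0 < d₀) {k₀ : ℕ} (hk : d = k₀ * d₀) (hk0 : 0 < k₀)
    (A : Set (ℝ → ℝ)) (hAc : ∀ f ∈ A, Continuous f)
    (hAF : ∀ f ∈ A, ∀ c : ℝ, Continuous fun w => f (p w + c))
    (hAper : ∀ f ∈ A, Function.Periodic f d)
    (hTd : ∀ τ : ℝ, (∀ f ∈ A, Function.Periodic f τ) → ∃ M : ℤ, τ = M * d)
    {x δ : ℝ} (hδ : 0 < δ) {q : ℝ → ℝ} (hqc : ContinuousOn q (ball x δ)) (hqx : q x = p x)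
    (hpq : ∀ y ∈ ball x δ, ∃ N : ℤ, p y - q y = N * d₀) :
    ∃ δ' > 0, δ' ≤ δ ∧ ∀ y ∈ ball x δ', ∃ M : ℤ, p y - q y = M * d := by
  choose! N hN using hpq
  have hNx : (N x : ℝ) * d₀ = 0 := by
    have := hN x (mem_ball_self hδ)
    rw [hqx] at this
    linarith
  by_contra hcon
  push_neg at hcon
  have hsel : ∀ i : ℕ, ∃ y', y' ∈ ball x (min δ (1/(i+1))) ∧ ¬ (k₀ : ℤ) ∣ N y' := by
    intro i
    have hpos : 0 < min δ (1/(i+1)) := lt_min hδ (by positivity)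
    obtain ⟨y', hy1, hy2⟩ := hcon (min δ (1/(i+1))) hpos (min_le_left _ _)
    refine ⟨y', hy1, fun hdvd => ?_⟩
    obtain ⟨M, hM⟩ := hdvd
    have hyball : y' ∈ ball x δ := by
      apply mem_ball.mpr (lt_of_lt_of_le (mem_ball.mp hy1) (min_le_left _ _))
    apply hy2 M
    rw [hN y' hyball, hM, hk]
    push_cast
    ring
  choose y hymem hynd using hsel
  have hyball : ∀ i, y i ∈ ball x δ :=
    fun i => mem_ball.mpr (lt_of_lt_of_le (mem_ball.mp (hymem i)) (min_le_left _ _))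
  -- pigeonhole on residues
  have hres : ∀ i, ((N (y i)) % k₀).toNat < k₀ := by
    intro i
    have h1 : 0 ≤ (N (y i)) % (k₀ : ℤ) := Int.emod_nonneg _ (by exact_mod_cast Nat.pos_iff_ne_zero.mp hk0)
    have h2 : (N (y i)) % (k₀ : ℤ) < k₀ := Int.emod_lt_of_pos _ (by exact_mod_cast hk0)
    omega
  set g : ℕ → Fin k₀ := fun i => ⟨((N (y i)) % k₀).toNat, hres i⟩ with hg
  obtain ⟨ρ, hρ⟩ := Finite.exists_infinite_fiber g
  have hρsel : ∀ i : ℕ, ∃ j, i ≤ j ∧ g j = ρ := by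
    intro i
    obtain ⟨j, hj1, hj2⟩ := (Set.infinite_coe_iff.mp hρ).exists_gt i
    exact ⟨j, le_of_lt hj2, hj1⟩
  choose m hmi hmρ using hρsel
  set u : ℕ → ℝ := fun i => y (m i) with hu
  have hux : Tendsto u atTop (𝓝 x) := by
    apply tendsto_of_abs_lt_inv
    intro i
    have h1 := mem_ball.mp (hymem (m i))
    rw [Real.dist_eq] at h1
    have h2 : min δ (1/((m i : ℝ)+1)) ≤ 1/((m i : ℝ)+1) := min_le_right _ _
    have h3 : (1:ℝ)/((m i : ℝ)+1) ≤ 1/((i:ℝ)+1) := by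
      apply one_div_le_one_div_of_le (by positivity)
      have : (i:ℝ) ≤ (m i : ℝ) := by exact_mod_cast hmi i
      linarith
    calc |u i - x| < min δ (1/((m i : ℝ)+1)) := h1
      _ ≤ 1/((i:ℝ)+1) := le_trans h2 h3
  have hρ0 : 0 < (ρ : ℕ) := by
    rcases Nat.eq_zero_or_pos (ρ : ℕ) with h | h
    case inr => exact h
    · exfalso
      have := hmρ 0
      have h2 : ((N (y (m 0))) % k₀).toNat = (ρ:ℕ) := congrArg Fin.val this
      rw [h] at h2
      apply hynd (m 0)
      have h3 : (N (y (m 0))) % k₀ = 0 := by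
        have h4 : 0 ≤ (N (y (m 0))) % (k₀:ℤ) := Int.emod_nonneg _ (by exact_mod_cast Nat.pos_iff_ne_zero.mp hk0)
        omega
      exact Int.dvd_of_emod_eq_zero h3
  -- the universal period ρ * d₀
  have hqcx : ContinuousAt q x := hqc.continuousAt (isOpen_ball.mem_nhds (mem_ball_self hδ))
  have hqux : Tendsto (fun i => q (u i)) atTop (𝓝 (q x)) := hqcx.tendsto.comp hux
  have hperall : ∀ f ∈ A, Function.Periodic f ((ρ : ℝ) * d₀) := by
    intro f hf
    have hfd : Function.Periodic f d := hAper f hf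
    intro z
    set c : ℝ := z - q x with hc
    have hkey : ∀ i, f (p (u i) + c) = f (q (u i) + (ρ:ℝ) * d₀ + c) := by
      intro i
      have hNeq : (N (u i) : ℝ) * d₀ = (ρ:ℝ) * d₀ + ((N (u i)) / k₀ : ℤ) * d := by
        have hmod : ((N (u i)) % k₀).toNat = (ρ:ℕ) := congrArg Fin.val (hmρ i)
        have hmod' : (N (u i)) % k₀ = (ρ:ℕ) := by
          have h4 : 0 ≤ (N (u i)) % (k₀:ℤ) := Int.emod_nonneg _ (by exact_mod_cast Nat.pos_iff_ne_zero.mp hk0)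
          omega
        have hdiv : (N (u i)) = k₀ * ((N (u i))/k₀) + (ρ:ℤ) := by
          rw [← hmod']
          exact (Int.mul_ediv_add_emod _ _).symm
        rw [hk]
        have : (N (u i) : ℝ) = (k₀:ℝ) * ((N (u i))/(k₀:ℤ) : ℤ) + (ρ:ℝ) := by exact_mod_cast hdiv
        rw [this]
        push_cast
        ring
      have h1 : p (u i) + c = q (u i) + (ρ:ℝ) * d₀ + c + ((N (u i)) / k₀ : ℤ) * d := by
        have := hN (u i) (hyball (m i))
        have h2 : p (u i) = q (u i) + (N (u i) : ℝ) * d₀ := by linarith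
        rw [h2, hNeq]
        ring
      rw [h1]
      exact (hfd.int_mul _) _
    -- limits
    have hL : Tendsto (fun i => f (p (u i) + c)) atTop (𝓝 (f (p x + c))) :=
      ((hAF f hf c).tendsto x).comp hux
    have hR : Tendsto (fun i => f (q (u i) + (ρ:ℝ) * d₀ + c)) atTop
        (𝓝 (f (q x + (ρ:ℝ) * d₀ + c))) :=
      ((hAc f hf).tendsto _).comp ((hqux.add_const _).add_const _)
    have hL' : Tendsto (fun i => f (p (u i) + c)) atTop (𝓝 (f (q x + (ρ:ℝ) * d₀ + c))) := by
      have : (fun i => f (p (u i) + c)) = fun i => f (q (u i) + (ρ:ℝ) * d₀ + c) := funext hkey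
      rw [this]
      exact hR
    have heq := tendsto_nhds_unique hL hL'
    rw [← hqx] at heq
    have e1 : q x + (ρ:ℝ) * d₀ + c = z + (ρ:ℝ) * d₀ := by rw [hc]; ring
    have e2 : q x + c = z := by rw [hc]; ring
    rw [← e1, ← heq, e2]
  obtain ⟨M, hM⟩ := hTd _ hperall
  rw [hk] at hM
  have hMZ : (ρ : ℤ) = M * k₀ := by
    have : ((ρ:ℤ) : ℝ) * d₀ = ((M * k₀ : ℤ) : ℝ) * d₀ := by push_cast; push_cast at hM; linarith
    have h2 : ((ρ:ℤ) : ℝ) = ((M * k₀ : ℤ) : ℝ) := mul_right_cancel₀ (ne_of_gt hd₀) this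
    exact_mod_cast h2
  have hρk : (ρ : ℤ) < k₀ := by exact_mod_cast ρ.2
  have hρ0' : 0 < (ρ : ℤ) := by exact_mod_cast hρ0
  rcases le_or_gt M 0 with hM0 | hM0
  · have : M * (k₀:ℤ) ≤ 0 := mul_nonpos_of_nonpos_of_nonneg hM0 (by positivity)
    omega
  · have : (k₀:ℤ) ≤ M * k₀ := le_mul_of_one_le_left (by positivity) hM0
    omega

theorem step7 {n : ℕ∞} {p : ℝ → ℝ} {d : ℝ}
    (hloc : ∀ x : ℝ, ∃ δ > 0, ∃ q : ℝ → ℝ, ContDiffAt ℝ n q x ∧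
      ∀ y ∈ ball x δ, ∃ M : ℤ, p y - q y = M * d)
    {g : ℝ → ℝ} (hg : ContDiff ℝ n g) (hgper : Function.Periodic g d) (c : ℝ) :
    ContDiff ℝ n fun w => g (p w + c) := by
  rw [contDiff_iff_contDiffAt]
  intro x
  obtain ⟨δ, hδ, q, hq, hpq⟩ := hloc x
  have h1 : ContDiffAt ℝ n (fun w => g (q w + c)) x :=
    hg.contDiffAt.comp x (hq.add contDiffAt_const)
  apply h1.congr_of_eventuallyEq
  filter_upwards [isOpen_ball.mem_nhds (mem_ball_self hδ)] with w hw
  obtain ⟨M, hM⟩ := hpq w hw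
  have e : p w + c = q w + c + M * d := by linarith
  rw [e]
  exact (hgper.int_mul M) _


end Stmt16

open Stmt16 in
theorem stmt_16 (n : ℕ∞) (p : ℝ → ℝ) (hp : ¬ ContDiff ℝ n p)
    (A : Set (ℝ → ℝ))
    (hA : A = {f | ContDiff ℝ n f ∧ ∀ c : ℝ, ContDiff ℝ n fun x => f (p x + c)}) :
    A = {f | ∃ k : ℝ, f = fun _ => k} ∨
      ∃ d : ℝ, d ≠ 0 ∧ A = {f | ContDiff ℝ n f ∧ Function.Periodic f d} := by
  classical
  have hn : n = 0 ∨ (1:WithTop ℕ∞) ≤ (n:WithTop ℕ∞) := by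
    rcases eq_or_ne n 0 with h | h
    · exact Or.inl h
    · right
      have h2 : (1:ℕ∞) ≤ n := ENat.one_le_iff_ne_zero.mpr h
      exact_mod_cast h2
  have hAc : ∀ f ∈ A, ContDiff ℝ n f := by
    intro f hf; rw [hA] at hf; exact hf.1
  have hAF : ∀ f ∈ A, ∀ c : ℝ, ContDiff ℝ n fun x => f (p x + c) := by
    intro f hf; rw [hA] at hf; exact hf.2
  by_cases hC : ∀ f ∈ A, ∃ k : ℝ, f = fun _ => k
  · left
    apply Subset.antisymm
    · intro f hf
      exact hC f hf
    · rintro f ⟨k, rfl⟩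
      rw [hA]
      exact ⟨contDiff_const, fun c => contDiff_const⟩
  · right
    push_neg at hC
    obtain ⟨f₀, hf₀A, hf₀nc⟩ := hC
    have hf₀ : ContDiff ℝ n f₀ := hAc f₀ hf₀A
    have hf₀c : ∀ c, ContDiff ℝ n fun x => f₀ (p x + c) := hAF f₀ hf₀A
    have hb₀x : ∃ b₀, f₀ b₀ ≠ f₀ 0 := by
      by_contra h
      push_neg at h
      exact hf₀nc (f₀ 0) (funext h)
    obtain ⟨b₀, hb₀⟩ := hb₀x
    set T : Set ℝ := {τ | ∀ f ∈ A, Function.Periodic f τ} with hTdef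
    have hTne : ∃ τ ∈ T, τ ≠ 0 := by
      by_contra h
      push_neg at h
      have hbsc : BSC p := by
        intro x u s hu hs
        have hτ : (s - p x) ∈ T := by
          intro f hf
          exact rel (hAc f hf).continuous (fun c => (hAF f hf c).continuous) hu hs
        have := h _ hτ
        linarith
      exact (mlemma hn hp hf₀ hf₀c hb₀ hbsc).elim
    obtain ⟨τ₀, hτ₀T, hτ₀⟩ := hTne
    set S : AddSubgroup ℝ :=
      { carrier := {τ | Function.Periodic f₀ τ},
        zero_mem' := by intro x; simp
        add_mem' := fun h1 h2 => h1.add_period h2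
        neg_mem' := fun h => h.neg } with hSdef
    have hSmem : ∀ τ : ℝ, τ ∈ S ↔ Function.Periodic f₀ τ := fun τ => Iff.rfl
    rcases AddSubgroup.dense_or_cyclic S with hd | ⟨a, ha⟩
    · exfalso
      have hext : ∀ z w : ℝ, f₀ z = f₀ w := by
        intro z w
        have h1 : (fun τ : ℝ => f₀ (z + τ)) = fun _ : ℝ => f₀ z := by
          apply Continuous.ext_on hd
          · exact hf₀.continuous.comp (continuous_const.add continuous_id)
          · exact continuous_const
          · intro τ hτ
            exact (hSmem τ).mp hτ z
        have h2 := congrFun h1 (w - z)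
        simp only [add_sub_cancel] at h2
        exact h2.symm
      exact hb₀ (hext b₀ 0)
    · have hmem : ∀ τ : ℝ, τ ∈ S ↔ ∃ NN : ℤ, NN • a = τ := by
        intro τ
        rw [ha]
        exact AddSubgroup.mem_closure_singleton
      have hτ₀S : τ₀ ∈ S := (hSmem τ₀).mpr (hτ₀T f₀ hf₀A)
      have ha0 : a ≠ 0 := by
        rintro rfl
        obtain ⟨NN, hNN⟩ := (hmem τ₀).mp hτ₀S
        simp at hNN
        exact hτ₀ hNN.symm
      set d₀ : ℝ := |a| with hd₀def
      have hd₀ : 0 < d₀ := abs_pos.mpr ha0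
      have hper : ∀ τ, Function.Periodic f₀ τ ↔ ∃ NN : ℤ, τ = NN * d₀ := by
        intro τ
        rw [← hSmem, hmem]
        constructor
        · rintro ⟨NN, rfl⟩
          rcases abs_cases a with ⟨h1, _⟩ | ⟨h1, _⟩
          · exact ⟨NN, by rw [hd₀def, h1, zsmul_eq_mul]⟩
          · exact ⟨-NN, by rw [hd₀def, h1, zsmul_eq_mul]; push_cast; ring⟩
        · rintro ⟨NN, rfl⟩
          rcases abs_cases a with ⟨h1, _⟩ | ⟨h1, _⟩
          · exact ⟨NN, by rw [hd₀def, h1, zsmul_eq_mul]⟩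
          · exact ⟨-NN, by rw [hd₀def, h1, zsmul_eq_mul]; push_cast; ring⟩
      obtain ⟨N₀, hN₀⟩ := (hper τ₀).mp (hτ₀T f₀ hf₀A)
      have hN₀0 : N₀ ≠ 0 := by
        rintro rfl
        simp at hN₀
        exact hτ₀ hN₀
      have hTneg : ∀ τ ∈ T, -τ ∈ T := fun τ hτ f hf => (hτ f hf).neg
      have hTsub : ∀ τ₁ ∈ T, ∀ τ₂ ∈ T, τ₁ - τ₂ ∈ T :=
        fun τ₁ h1 τ₂ h2 f hf => (h1 f hf).sub_period (h2 f hf)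
      have hTint : ∀ τ ∈ T, ∀ M : ℤ, ((M:ℝ) * τ) ∈ T := fun τ hτ M f hf => (hτ f hf).int_mul M
      have hOex : ∃ k : ℕ, 0 < k ∧ ((k:ℝ) * d₀) ∈ T := by
        rcases lt_trichotomy N₀ 0 with h | h | h
        · refine ⟨(-N₀).toNat, by omega, ?_⟩
          have hc : (((-N₀).toNat : ℕ) : ℝ) = -(N₀ : ℝ) := by
            have h2 : ((-N₀).toNat : ℤ) = -N₀ := Int.toNat_of_nonneg (by omega)
            exact_mod_cast h2
          have he : (((-N₀).toNat : ℕ) : ℝ) * d₀ = -τ₀ := by rw [hN₀, hc]; ring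
          rw [he]
          exact hTneg τ₀ hτ₀T
        · exact absurd h hN₀0
        · refine ⟨N₀.toNat, by omega, ?_⟩
          have hc : ((N₀.toNat : ℕ) : ℝ) = (N₀ : ℝ) := by
            have h2 : (N₀.toNat : ℤ) = N₀ := Int.toNat_of_nonneg (by omega)
            exact_mod_cast h2
          have he : ((N₀.toNat : ℕ) : ℝ) * d₀ = τ₀ := by rw [hN₀, hc]
          rw [he]
          exact hτ₀T
      set k₀ := Nat.find hOex with hk₀def
      obtain ⟨hk₀pos, hk₀T⟩ := Nat.find_spec hOex
      set d : ℝ := (k₀:ℝ) * d₀ with hddef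
      have hdpos : 0 < d := mul_pos (by exact_mod_cast hk₀pos) hd₀
      have hdT : d ∈ T := hk₀T
      have hTd : ∀ τ : ℝ, (∀ f ∈ A, Function.Periodic f τ) → ∃ M : ℤ, τ = M * d := by
        intro τ hτ
        obtain ⟨NN, hNN⟩ := (hper τ).mp (hτ f₀ hf₀A)
        set r : ℤ := NN % k₀ with hrdef
        set qq : ℤ := NN / k₀ with hqqdef
        have hk₀Z : (0:ℤ) < (k₀:ℤ) := by exact_mod_cast hk₀pos
        have hr0 : 0 ≤ r := Int.emod_nonneg _ (ne_of_gt hk₀Z)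
        have hrk : r < k₀ := Int.emod_lt_of_pos _ hk₀Z
        have hNNeq : (NN:ℝ) = (k₀:ℝ) * (qq:ℝ) + (r:ℝ) := by
          exact_mod_cast congrArg (Int.cast : ℤ → ℝ) (Int.mul_ediv_add_emod NN k₀).symm
        have hrT : ((r:ℝ) * d₀) ∈ T := by
          have h1 : (r:ℝ) * d₀ = τ - (qq:ℝ) * d := by
            rw [hNN, hddef, hNNeq]
            ring
          rw [h1]
          exact hTsub τ hτ _ (hTint d hdT qq)
        rcases eq_or_lt_of_le hr0 with hr | hr
        · refine ⟨qq, ?_⟩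
          rw [hNN, hddef, hNNeq, ← hr]
          push_cast
          ring
        · exfalso
          have hlt : r.toNat < k₀ := by omega
          have hmemO : 0 < r.toNat ∧ ((r.toNat : ℝ) * d₀) ∈ T := by
            constructor
            · omega
            · have : ((r.toNat : ℕ) : ℝ) = (r : ℝ) := by exact_mod_cast Int.toNat_of_nonneg hr0
              rw [this]
              exact hrT
          exact Nat.find_min hOex hlt hmemO
      have hAper : ∀ f ∈ A, Function.Periodic f d := fun f hf => hdT f hf
      have hloc : ∀ x : ℝ, ∃ δ > 0, ∃ q : ℝ → ℝ, ContDiffAt ℝ n q x ∧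
          ∀ y ∈ ball x δ, ∃ M : ℤ, p y - q y = M * d := by
        intro x
        obtain ⟨δ, hδ, q, hqc, hqs, hqx, hq1⟩ := step5 hn hf₀ hf₀c hb₀ hd₀ hper x
        obtain ⟨δ', hδ'pos, hδ'le, h6⟩ := step6 hd₀ hddef hk₀pos A
          (fun f hf => (hAc f hf).continuous) (fun f hf c => (hAF f hf c).continuous)
          hAper hTd hδ hqc hqx (fun y hy => (hq1 y hy).2)
        exact ⟨δ', hδ'pos, q, hqs x (mem_ball_self hδ), h6⟩
      refine ⟨d, ne_of_gt hdpos, ?_⟩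
      apply Subset.antisymm
      · intro f hf
        exact ⟨hAc f hf, hdT f hf⟩
      · rintro f ⟨hfC, hfP⟩
        rw [hA]
        exact ⟨hfC, fun c => step7 hloc hfC hfP c⟩
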